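/- Under the p = 2 inexact adaptive regularization framework described in the context, there exists a constant C > 0 such that for every k ≥ 0: min_{1 ≤ j ≤ k+1} χ⁻(∇²f(x_j)) ≤ C · (k+1)^{−1/3}, where χ⁻(∇²f(x_j)) = sup over unit vectors d of max(0, −⟨∇²f(x_j) d, d⟩) is the negative curvature of the Hessian of f at x_j. -/

import Mathlib

open scoped InnerProductSpace
lemma young_cube {a b : ℝ} (ha : 0 ≤ a) (hb : 0 ≤ b) :
    a * b ^ 2 ≤ (a ^ 3 + 2 * b ^ 3) / 3 := by
  nlinarith [mul_nonneg (sq_nonneg (a - b)) (by positivity : (0:ℝ) ≤ a + 2 * b)]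

lemma cube_root_le {a y : ℝ} (ha : 0 ≤ a) (h : a ^ 3 ≤ y) : a ≤ y ^ ((1:ℝ)/3) := by
  have h0 : (0:ℝ) ≤ a ^ 3 := by positivity
  have : a = (a ^ 3 : ℝ) ^ ((1:ℝ)/3) := by
    rw [← Real.rpow_natCast a 3, ← Real.rpow_mul ha]
    norm_num
  rw [this]
  exact Real.rpow_le_rpow h0 h (by norm_num)

lemma taylor_aux {n : ℕ} (f : EuclideanSpace ℝ (Fin n) → ℝ)
    (hf : ContDiff ℝ (2 : ℕ∞) f)
    (H : EuclideanSpace ℝ (Fin n) → (EuclideanSpace ℝ (Fin n) →L[ℝ] EuclideanSpace ℝ (Fin n)))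
    (hH : ∀ (x u v : EuclideanSpace ℝ (Fin n)), ⟪H x u, v⟫_ℝ = iteratedFDeriv ℝ 2 f x ![u, v])
    (L : ℝ) (hL0 : 0 ≤ L)
    (hLip : ∀ x y, ‖H x - H y‖ ≤ L * ‖x - y‖)
    (x s : EuclideanSpace ℝ (Fin n)) :
    f (x + s) ≤ f x + ⟪gradient f x, s⟫_ℝ + (1/2) * ⟪H x s, s⟫_ℝ + (L/6) * ‖s‖^3 := by
  have hdf : Differentiable ℝ f := hf.differentiable (by norm_num)
  have hdf' : Differentiable ℝ (fderiv ℝ f) :=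
    (hf.fderiv_right (m := 1) (by norm_num)).differentiable one_ne_zero
  -- the line
  have hline : ∀ t : ℝ, HasDerivAt (fun t : ℝ => x + t • s) s t := by
    intro t
    simpa using ((hasDerivAt_id t).smul_const s).const_add x
  set ψ : ℝ → ℝ := fun t => fderiv ℝ f (x + t • s) s with hψdef
  have hφ : ∀ t : ℝ, HasDerivAt (fun t : ℝ => f (x + t • s)) (ψ t) t := by
    intro t
    exact ((hdf _).hasFDerivAt.comp_hasDerivAt t (hline t))
  have hψ : ∀ t : ℝ, HasDerivAt ψ (fderiv ℝ (fderiv ℝ f) (x + t • s) s s) t := by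
    intro t
    have h1 : HasDerivAt (fun t : ℝ => fderiv ℝ f (x + t • s))
        (fderiv ℝ (fderiv ℝ f) (x + t • s) s) t :=
      ((hdf' _).hasFDerivAt.comp_hasDerivAt t (hline t))
    simpa using h1.clm_apply (hasDerivAt_const t s)
  have hH2 : ∀ y : EuclideanSpace ℝ (Fin n), ∀ u v,
      ⟪H y u, v⟫_ℝ = fderiv ℝ (fderiv ℝ f) y u v := by
    intro y u v
    rw [hH, iteratedFDeriv_two_apply]
    simp
  have hinner : ∀ y : EuclideanSpace ℝ (Fin n),
      fderiv ℝ (fderiv ℝ f) y s s = ⟪H y s, s⟫_ℝ := fun y => (hH2 y s s).symm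
  -- bound on second derivative variation
  have hvar : ∀ t : ℝ, 0 ≤ t →
      ⟪H (x + t • s) s, s⟫_ℝ - ⟪H x s, s⟫_ℝ ≤ t * (L * ‖s‖^3) := by
    intro t ht
    have h1 : ⟪H (x + t • s) s, s⟫_ℝ - ⟪H x s, s⟫_ℝ = ⟪(H (x + t • s) - H x) s, s⟫_ℝ := by
      simp [ContinuousLinearMap.sub_apply, inner_sub_left]
    rw [h1]
    calc ⟪(H (x + t • s) - H x) s, s⟫_ℝ ≤ ‖(H (x + t • s) - H x) s‖ * ‖s‖ :=
          real_inner_le_norm _ _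
      _ ≤ (‖H (x + t • s) - H x‖ * ‖s‖) * ‖s‖ := by
          gcongr; exact (H (x + t • s) - H x).le_opNorm s
      _ ≤ ((L * ‖x + t • s - x‖) * ‖s‖) * ‖s‖ := by
          gcongr
          exact hLip _ _
      _ = t * (L * ‖s‖^3) := by
          have : ‖x + t • s - x‖ = t * ‖s‖ := by
            simp [norm_smul, abs_of_nonneg ht]
          rw [this]; ring
  set A : ℝ := ⟪H x s, s⟫_ℝ with hA
  set c : ℝ := L * ‖s‖^3 with hc
  have hc0 : 0 ≤ c := by positivity
  set ζ : ℝ → ℝ := fun t => ψ t - ψ 0 - t * A - t^2 * c / 2 with hζdef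
  have hζd : ∀ t : ℝ, HasDerivAt ζ (⟪H (x + t • s) s, s⟫_ℝ - A - t * c) t := by
    intro t
    have h1 := hψ t
    rw [hinner] at h1
    have h2 : HasDerivAt ζ (⟪H (x + t • s) s, s⟫_ℝ - 0 - A - ((2:ℕ) * t ^ 1 * c) / 2) t :=
      (((h1.sub (hasDerivAt_const t (ψ 0))).sub (hasDerivAt_mul_const A)).sub
        (((hasDerivAt_pow 2 t).mul_const c).div_const 2))
    convert h2 using 1
    ring
  have hζcont : Continuous ζ := by
    have : Differentiable ℝ ζ := fun t => (hζd t).differentiableAt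
    exact this.continuous
  have hζanti : AntitoneOn ζ (Set.Ici 0) := by
    apply antitoneOn_of_deriv_nonpos (convex_Ici 0) hζcont.continuousOn
    · intro t ht
      exact (hζd t).differentiableAt.differentiableWithinAt
    · intro t ht
      rw [interior_Ici] at ht
      rw [(hζd t).deriv]
      have := hvar t (le_of_lt ht)
      linarith
  have hζ0 : ζ 0 = 0 := by simp [hζdef]
  have hζle : ∀ t : ℝ, 0 ≤ t → ζ t ≤ 0 := by
    intro t ht
    have := hζanti (Set.self_mem_Ici) (Set.mem_Ici.mpr ht) ht
    rw [hζ0] at this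
    exact this
  set φ : ℝ → ℝ := fun t => f (x + t • s) with hφdef
  set η : ℝ → ℝ := fun t => φ t - φ 0 - t * ψ 0 - t^2 / 2 * A - t^3 / 6 * c with hηdef
  have hηd : ∀ t : ℝ, HasDerivAt η (ζ t) t := by
    intro t
    have h2 : HasDerivAt η (ψ t - 0 - ψ 0 - ((2:ℕ) * t ^ 1 / 2) * A - ((3:ℕ) * t ^ 2 / 6) * c) t :=
      ((((hφ t).sub (hasDerivAt_const t (φ 0))).sub (hasDerivAt_mul_const (ψ 0))).sub
        (((hasDerivAt_pow 2 t).div_const 2).mul_const A)).sub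
        (((hasDerivAt_pow 3 t).div_const 6).mul_const c)
    convert h2 using 1
    simp only [hζdef]
    push_cast
    ring
  have hηcont : Continuous η := by
    have : Differentiable ℝ η := fun t => (hηd t).differentiableAt
    exact this.continuous
  have hηanti : AntitoneOn η (Set.Ici 0) := by
    apply antitoneOn_of_deriv_nonpos (convex_Ici 0) hηcont.continuousOn
    · intro t ht
      exact (hηd t).differentiableAt.differentiableWithinAt
    · intro t ht
      rw [interior_Ici] at ht
      rw [(hηd t).deriv]
      exact hζle t (le_of_lt ht)
  have hη1 : η 1 ≤ η 0 := hηanti (Set.self_mem_Ici) (Set.mem_Ici.mpr zero_le_one) zero_le_one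
  have hη0 : η 0 = 0 := by simp [hηdef]
  rw [hη0] at hη1
  have hφ1 : φ 1 = f (x + s) := by simp [hφdef]
  have hφ0 : φ 0 = f x := by simp [hφdef]
  have hψ0 : ψ 0 = ⟪gradient f x, s⟫_ℝ := by
    simp only [hψdef, zero_smul, add_zero]
    rw [gradient]
    exact (InnerProductSpace.toDual_symm_apply).symm
  have : η 1 = f (x + s) - f x - ⟪gradient f x, s⟫_ℝ - (1/2) * A - (1/6) * c := by
    simp only [hηdef, hφ1, hφ0, hψ0]
    ring
  rw [this] at hη1
  rw [hA, hc] at hη1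
  nlinarith [hη1]
set_option maxHeartbeats 1600000 in
theorem stmt_18 (n m : ℕ) (hn : 1 ≤ n) (hm : 1 ≤ m)
    (f : EuclideanSpace ℝ (Fin n) → ℝ)
    (hf : ContDiff ℝ (2 : ℕ∞) f)
    (H : EuclideanSpace ℝ (Fin n) → (EuclideanSpace ℝ (Fin n) →L[ℝ] EuclideanSpace ℝ (Fin n)))
    (hH : ∀ (x u v : EuclideanSpace ℝ (Fin n)), ⟪H x u, v⟫_ℝ = iteratedFDeriv ℝ 2 f x ![u, v])
    (hHsa : ∀ x, IsSelfAdjoint (H x))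
    (f_low : ℝ) (hflow : ∀ x, f_low ≤ f x)
    (L : ℝ) (hL : 3 ≤ L)
    (hLip : ∀ x y, ‖H x - H y‖ ≤ L * ‖x - y‖)
    (σ₀ θ₁ θ₂ κD : ℝ) (hσ₀ : 0 < σ₀) (hθ₁ : 1 < θ₁) (hθ₂ : 1 < θ₂) (hκD : 0 ≤ κD)
    (x s : ℕ → EuclideanSpace ℝ (Fin n))
    (B : ℕ → (EuclideanSpace ℝ (Fin n) →L[ℝ] EuclideanSpace ℝ (Fin n)))
    (hBsa : ∀ k, IsSelfAdjoint (B k))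
    (σ : ℕ → ℝ) (hσ0 : σ 0 = σ₀)
    (hx : ∀ k, x (k + 1) = x k + s k)
    (hσrec : ∀ k, σ (k + 1) = σ k + σ k * ‖s k‖ ^ 3)
    (ξ : ℕ → ℝ)
    (hξ : ∀ k, ξ k = ∑ i ∈ Finset.Icc 1 (2 * m - 1),
      if i ≤ k then ‖s (k - i)‖ ^ 3 else 1)
    (chi : (EuclideanSpace ℝ (Fin n) →L[ℝ] EuclideanSpace ℝ (Fin n)) → ℝ)
    (hchi : ∀ A, chi A =
      sSup {r : ℝ | ∃ d : EuclideanSpace ℝ (Fin n), ‖d‖ = 1 ∧ r = max 0 (-⟪A d, d⟫_ℝ)})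
    (ha : ∀ k, ‖B k - H (x k)‖ ^ 3 ≤ κD * ξ k)
    (hb : ∀ k, ⟪gradient f (x k), s k⟫_ℝ + (1 / 2) * ⟪B k (s k), s k⟫_ℝ
        + (σ k / 6) * ‖s k‖ ^ 3 ≤ 0)
    (hc : ∀ k, ‖gradient f (x k) + B k (s k)‖ ≤ (θ₁ * σ k / 2) * ‖s k‖ ^ 2)
    (hd : ∀ k, chi (B k) ≤ θ₂ * σ k * ‖s k‖) :
    ∃ C : ℝ, 0 < C ∧ ∀ k : ℕ,
      (Finset.Icc 1 (k + 1)).inf' (Finset.nonempty_Icc.mpr (Nat.le_add_left 1 k))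
          (fun j => chi (H (x j))) ≤
        C * ((k : ℝ) + 1) ^ (-(1 : ℝ) / 3) := by
  classical
  set W : ℕ → ℝ := fun k => ‖s k‖ ^ 3 with hWdef
  have hW0 : ∀ k, 0 ≤ W k := fun k => by positivity
  have hξ0 : ∀ k, 0 ≤ ξ k := by
    intro k
    rw [hξ]
    apply Finset.sum_nonneg
    intro i _
    split
    · positivity
    · norm_num
  -- σ is positive, monotone, and has the telescoping formula
  have hσpos : ∀ k, 0 < σ k := by
    intro k
    induction k with
    | zero => rw [hσ0]; exact hσ₀
    | succ k ih =>
      rw [hσrec]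
      have := mul_nonneg ih.le (pow_nonneg (norm_nonneg (s k)) 3)
      linarith
  have hσmono : Monotone σ := by
    apply monotone_nat_of_le_succ
    intro k
    rw [hσrec]
    have := mul_nonneg (hσpos k).le (pow_nonneg (norm_nonneg (s k)) 3)
    linarith
  have hσge : ∀ k, σ₀ ≤ σ k := by
    intro k
    rw [← hσ0]; exact hσmono (Nat.zero_le k)
  have hσsum : ∀ K, σ K = σ₀ + ∑ k ∈ Finset.range K, σ k * W k := by
    intro K
    induction K with
    | zero => simp [hσ0]
    | succ K ih => rw [Finset.sum_range_succ, hσrec, ih]; ring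
  -- per-step descent
  have hstep : ∀ k, f (x (k + 1)) ≤ f (x k) + κD * ξ k / 6 + (L + 2 - σ k) / 6 * W k := by
    intro k
    have ht := taylor_aux f hf H hH L (by linarith) hLip (x k) (s k)
    rw [← hx k] at ht
    have hsplit : ⟪H (x k) (s k), s k⟫_ℝ
        = ⟪B k (s k), s k⟫_ℝ + ⟪(H (x k) - B k) (s k), s k⟫_ℝ := by
      rw [ContinuousLinearMap.sub_apply, inner_sub_left]; ring
    have h1 : ⟪(H (x k) - B k) (s k), s k⟫_ℝ ≤ ‖H (x k) - B k‖ * ‖s k‖ ^ 2 := by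
      calc ⟪(H (x k) - B k) (s k), s k⟫_ℝ ≤ ‖(H (x k) - B k) (s k)‖ * ‖s k‖ :=
            real_inner_le_norm _ _
        _ ≤ (‖H (x k) - B k‖ * ‖s k‖) * ‖s k‖ := by
            gcongr; exact (H (x k) - B k).le_opNorm (s k)
        _ = ‖H (x k) - B k‖ * ‖s k‖ ^ 2 := by ring
    have h2 : ‖H (x k) - B k‖ * ‖s k‖ ^ 2 ≤ (‖H (x k) - B k‖ ^ 3 + 2 * ‖s k‖ ^ 3) / 3 :=
      young_cube (norm_nonneg _) (norm_nonneg _)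
    have h3 : ‖H (x k) - B k‖ ^ 3 ≤ κD * ξ k := by
      rw [norm_sub_rev]; exact ha k
    have hb' := hb k
    simp only [hWdef]
    nlinarith [ht, hb', h1, h2, h3]
  -- telescoped descent
  have htel : ∀ K, f (x K) ≤ f (x 0) + (κD / 6) * ∑ k ∈ Finset.range K, ξ k
      - (1 / 6) * ∑ k ∈ Finset.range K, (σ k - (L + 2)) * W k := by
    intro K
    induction K with
    | zero => simp
    | succ K ih =>
      rw [Finset.sum_range_succ, Finset.sum_range_succ]
      have := hstep K
      nlinarith [this, ih]
  -- window sum bound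
  set mm : ℝ := ((2 * m - 1 : ℕ) : ℝ) with hmm
  have hmm0 : 0 ≤ mm := Nat.cast_nonneg _
  have hξsum : ∀ K, ∑ k ∈ Finset.range K, ξ k
      ≤ mm ^ 2 + mm * ∑ k ∈ Finset.range K, W k := by
    intro K
    have hswap : ∑ k ∈ Finset.range K, ξ k
        = ∑ i ∈ Finset.Icc 1 (2 * m - 1), ∑ k ∈ Finset.range K,
            (if i ≤ k then W (k - i) else 1) := by
      rw [Finset.sum_comm]
      exact Finset.sum_congr rfl fun k _ => hξ k
    rw [hswap]
    have hinner : ∀ i ∈ Finset.Icc 1 (2 * m - 1),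
        ∑ k ∈ Finset.range K, (if i ≤ k then W (k - i) else 1)
          ≤ mm + ∑ j ∈ Finset.range K, W j := by
      intro i hi
      have hi' : i ≤ 2 * m - 1 := (Finset.mem_Icc.mp hi).2
      rw [Finset.sum_ite]
      have hcard : ((Finset.range K).filter (fun k => ¬ i ≤ k)).card ≤ i := by
        have hsub : (Finset.range K).filter (fun k => ¬ i ≤ k) ⊆ Finset.range i := by
          intro a haa
          simp only [Finset.mem_filter, Finset.mem_range, not_le] at haa ⊢
          exact haa.2
        simpa using Finset.card_le_card hsub
      have hA : ∑ _k ∈ (Finset.range K).filter (fun k => ¬ i ≤ k), (1:ℝ) ≤ mm := by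
        rw [Finset.sum_const, nsmul_eq_mul, mul_one]
        calc (((Finset.range K).filter (fun k => ¬ i ≤ k)).card : ℝ) ≤ (i : ℝ) := by
              exact_mod_cast hcard
          _ ≤ mm := by rw [hmm]; exact_mod_cast hi'
      have hfilter : (Finset.range K).filter (fun k => i ≤ k) = Finset.Ico i K := by
        ext a
        simp [Finset.mem_filter, Finset.mem_range, Finset.mem_Ico, and_comm]
      have hB : ∑ k ∈ (Finset.range K).filter (fun k => i ≤ k), W (k - i)
          ≤ ∑ j ∈ Finset.range K, W j := by
        rw [hfilter, Finset.sum_Ico_eq_sum_range]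
        have heq : ∀ j, W (i + j - i) = W j := fun j => by
          congr 1; omega
        calc ∑ j ∈ Finset.range (K - i), W (i + j - i)
            = ∑ j ∈ Finset.range (K - i), W j := Finset.sum_congr rfl fun j _ => heq j
          _ ≤ ∑ j ∈ Finset.range K, W j := by
              apply Finset.sum_le_sum_of_subset_of_nonneg
              · exact Finset.range_subset_range.mpr (Nat.sub_le K i)
              · intro j _ _; exact hW0 j
      linarith
    calc ∑ i ∈ Finset.Icc 1 (2 * m - 1), ∑ k ∈ Finset.range K,
            (if i ≤ k then W (k - i) else 1)
        ≤ ∑ _i ∈ Finset.Icc 1 (2 * m - 1), (mm + ∑ j ∈ Finset.range K, W j) :=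
          Finset.sum_le_sum hinner
      _ ≤ mm ^ 2 + mm * ∑ k ∈ Finset.range K, W k := by
          rw [Finset.sum_const, nsmul_eq_mul]
          have hcard : ((Finset.Icc 1 (2 * m - 1)).card : ℝ) ≤ mm := by
            rw [Nat.card_Icc]
            have h9 : 2 * m - 1 + 1 - 1 = 2 * m - 1 := by omega
            rw [h9, hmm]
          have hsum0 : 0 ≤ mm + ∑ j ∈ Finset.range K, W j := by
            have : (0:ℝ) ≤ ∑ j ∈ Finset.range K, W j :=
              Finset.sum_nonneg fun j _ => hW0 j
            linarith
          nlinarith [hsum0, hcard, Finset.sum_nonneg (fun j _ => hW0 j : ∀ j ∈ Finset.range K, 0 ≤ W j)]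
  -- combined main inequality
  set D : ℝ := f (x 0) - f_low with hD
  have hD0 : 0 ≤ D := by have := hflow (x 0); simp [hD]; linarith
  set M : ℝ := L + 2 + κD * mm with hM
  have hMpos : 0 < M := by nlinarith [mul_nonneg hκD hmm0]
  set E₀ : ℝ := 6 * D + κD * mm ^ 2 with hE₀
  have hE₀0 : 0 ≤ E₀ := by nlinarith [mul_nonneg hκD (sq_nonneg mm)]
  have hmain : ∀ K, ∑ k ∈ Finset.range K, (σ k - M) * W k ≤ E₀ := by
    intro K
    have h1 := htel K
    have h2 := hflow (x K)
    have h3 := hξsum K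
    have hsplit : ∑ k ∈ Finset.range K, (σ k - M) * W k
        = ∑ k ∈ Finset.range K, (σ k - (L + 2)) * W k
          - κD * mm * ∑ k ∈ Finset.range K, W k := by
      rw [Finset.mul_sum, ← Finset.sum_sub_distrib]
      apply Finset.sum_congr rfl
      intro k _
      rw [hM]; ring
    rw [hsplit, hE₀]
    nlinarith [h1, h2, h3]
  -- boundedness of the sum of cubes of step norms
  have hSbound : ∃ S : ℝ, 0 ≤ S ∧ ∀ K, ∑ k ∈ Finset.range K, W k ≤ S := by
    by_cases hcase : ∀ k, σ k ≤ 2 * M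
    · refine ⟨2 * M / σ₀, by positivity, fun K => ?_⟩
      have h1 : σ₀ * ∑ k ∈ Finset.range K, W k ≤ ∑ k ∈ Finset.range K, σ k * W k := by
        rw [Finset.mul_sum]
        apply Finset.sum_le_sum
        intro k _
        exact mul_le_mul_of_nonneg_right (hσge k) (hW0 k)
      have h2 : ∑ k ∈ Finset.range K, σ k * W k = σ K - σ₀ := by
        rw [hσsum K]; ring
      have h3 := hcase K
      rw [h2] at h1
      rw [le_div_iff₀ hσ₀, mul_comm]
      linarith
    · push_neg at hcase
      obtain ⟨k₀, hk₀⟩ := hcase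
      set P : ℝ := ∑ k ∈ Finset.range k₀, W k with hP
      have hP0 : 0 ≤ P := Finset.sum_nonneg fun k _ => hW0 k
      have hquot : 0 ≤ (E₀ + M * P) / M :=
        div_nonneg (by nlinarith [mul_nonneg hMpos.le hP0]) hMpos.le
      refine ⟨P + (E₀ + M * P) / M, by linarith, fun K => ?_⟩
      rcases le_or_gt K k₀ with hK | hK
      · have hsub : ∑ k ∈ Finset.range K, W k ≤ P := by
          apply Finset.sum_le_sum_of_subset_of_nonneg
          · exact Finset.range_subset_range.mpr hK
          · intro j _ _; exact hW0 j
        linarith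
      · have hsplit : ∑ k ∈ Finset.range K, W k
            = P + ∑ k ∈ Finset.Ico k₀ K, W k := by
          rw [hP]
          exact (Finset.sum_range_add_sum_Ico _ hK.le).symm
        have hlo : M * ∑ k ∈ Finset.Ico k₀ K, W k
            ≤ ∑ k ∈ Finset.Ico k₀ K, (σ k - M) * W k := by
          rw [Finset.mul_sum]
          apply Finset.sum_le_sum
          intro k hk
          have hk' : k₀ ≤ k := (Finset.mem_Ico.mp hk).1
          have : 2 * M ≤ σ k := (hk₀.le).trans (hσmono hk')
          nlinarith [hW0 k]
        have hsplit2 : ∑ k ∈ Finset.range K, (σ k - M) * W k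
            = ∑ k ∈ Finset.range k₀, (σ k - M) * W k
              + ∑ k ∈ Finset.Ico k₀ K, (σ k - M) * W k :=
          (Finset.sum_range_add_sum_Ico _ hK.le).symm
        have hneg : - (M * P) ≤ ∑ k ∈ Finset.range k₀, (σ k - M) * W k := by
          rw [hP, Finset.mul_sum, ← Finset.sum_neg_distrib]
          apply Finset.sum_le_sum
          intro k _
          nlinarith [hW0 k, hσpos k]
        have h1 := hmain K
        have h2 : M * ∑ k ∈ Finset.Ico k₀ K, W k ≤ E₀ + M * P := by
          rw [hsplit2] at h1
          linarith
        have h3 : ∑ k ∈ Finset.Ico k₀ K, W k ≤ (E₀ + M * P) / M := by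
          rw [le_div_iff₀ hMpos, mul_comm]
          exact h2
        linarith [hsplit, h3]
  obtain ⟨S, hS0, hS⟩ := hSbound
  -- σ is bounded
  set σm : ℝ := σ₀ + E₀ + M * S with hσm
  have hσmpos : 0 < σm := by nlinarith [mul_nonneg hMpos.le hS0]
  have hσmax : ∀ k, σ k ≤ σm := by
    intro K
    have h1 := hmain K
    have h2 : ∑ k ∈ Finset.range K, σ k * W k
        = ∑ k ∈ Finset.range K, (σ k - M) * W k + M * ∑ k ∈ Finset.range K, W k := by
      rw [Finset.mul_sum, ← Finset.sum_add_distrib]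
      apply Finset.sum_congr rfl
      intro k _
      ring
    have h3 := hS K
    rw [hσsum K, hσm, h2]
    nlinarith
  -- chi basics
  obtain ⟨d₀, hd₀⟩ : ∃ d : EuclideanSpace ℝ (Fin n), ‖d‖ = 1 :=
    ⟨EuclideanSpace.single ⟨0, hn⟩ (1:ℝ), by simp [EuclideanSpace.norm_single]⟩
  have hel : ∀ (A : EuclideanSpace ℝ (Fin n) →L[ℝ] EuclideanSpace ℝ (Fin n))
      (d : EuclideanSpace ℝ (Fin n)), ‖d‖ = 1 → max 0 (-⟪A d, d⟫_ℝ) ≤ ‖A‖ := by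
    intro A d hd
    apply max_le (norm_nonneg A)
    have h1 : |⟪A d, d⟫_ℝ| ≤ ‖A d‖ * ‖d‖ := abs_real_inner_le_norm _ _
    have h2 : ‖A d‖ ≤ ‖A‖ * ‖d‖ := A.le_opNorm d
    rw [hd] at h1 h2
    simp only [mul_one] at h1 h2
    have := neg_abs_le (⟪A d, d⟫_ℝ)
    linarith
  have hbdd : ∀ (A : EuclideanSpace ℝ (Fin n) →L[ℝ] EuclideanSpace ℝ (Fin n)),
      BddAbove {r : ℝ | ∃ d : EuclideanSpace ℝ (Fin n), ‖d‖ = 1 ∧ r = max 0 (-⟪A d, d⟫_ℝ)} := by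
    intro A
    refine ⟨‖A‖, ?_⟩
    rintro r ⟨d, hd, rfl⟩
    exact hel A d hd
  have hmem : ∀ (A : EuclideanSpace ℝ (Fin n) →L[ℝ] EuclideanSpace ℝ (Fin n))
      (d : EuclideanSpace ℝ (Fin n)), ‖d‖ = 1 → max 0 (-⟪A d, d⟫_ℝ) ≤ chi A := by
    intro A d hd
    rw [hchi A]
    exact le_csSup (hbdd A) ⟨d, hd, rfl⟩
  have hchile : ∀ (A A' : EuclideanSpace ℝ (Fin n) →L[ℝ] EuclideanSpace ℝ (Fin n)),
      chi A ≤ chi A' + ‖A - A'‖ := by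
    intro A A'
    have hch0 : 0 ≤ chi A' := le_trans (le_max_left _ _) (hmem A' d₀ hd₀)
    rw [hchi A]
    refine csSup_le ⟨_, ⟨d₀, hd₀, rfl⟩⟩ ?_
    rintro r ⟨d, hd, rfl⟩
    have h1 : max 0 (-⟪A' d, d⟫_ℝ) ≤ chi A' := hmem A' d hd
    have h2 : -⟪A d, d⟫_ℝ = -⟪A' d, d⟫_ℝ + ⟪(A' - A) d, d⟫_ℝ := by
      rw [ContinuousLinearMap.sub_apply, inner_sub_left]; ring
    have h3 : ⟪(A' - A) d, d⟫_ℝ ≤ ‖A - A'‖ := by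
      calc ⟪(A' - A) d, d⟫_ℝ ≤ ‖(A' - A) d‖ * ‖d‖ := real_inner_le_norm _ _
        _ ≤ (‖A' - A‖ * ‖d‖) * ‖d‖ := by gcongr; exact (A' - A).le_opNorm d
        _ = ‖A - A'‖ := by rw [norm_sub_rev]; rw [hd]; ring
    apply max_le
    · have := norm_nonneg (A - A')
      linarith
    · have h4 : -⟪A' d, d⟫_ℝ ≤ max 0 (-⟪A' d, d⟫_ℝ) := le_max_right _ _
      linarith
  -- the per-iteration curvature bound
  have hkey : ∀ j, chi (H (x (j + 1)))
      ≤ (θ₂ * σm + L) * ‖s j‖ + (κD * ξ j) ^ ((1:ℝ)/3) := by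
    intro j
    have h1 := hchile (H (x (j + 1))) (B j)
    have h2 : ‖H (x (j + 1)) - B j‖
        ≤ ‖H (x (j + 1)) - H (x j)‖ + ‖H (x j) - B j‖ := by
      rw [← sub_add_sub_cancel (H (x (j + 1))) (H (x j)) (B j)]
      exact norm_add_le _ _
    have h3 : ‖H (x (j + 1)) - H (x j)‖ ≤ L * ‖s j‖ := by
      have h := hLip (x (j + 1)) (x j)
      have e : x (j + 1) - x j = s j := by rw [hx j]; abel
      rw [e] at h
      exact h
    have h4 : ‖H (x j) - B j‖ ≤ (κD * ξ j) ^ ((1:ℝ)/3) := by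
      apply cube_root_le (norm_nonneg _)
      rw [norm_sub_rev]
      exact ha j
    have h5 : chi (B j) ≤ θ₂ * σm * ‖s j‖ := by
      have hdj := hd j
      have hσj := hσmax j
      have := mul_le_mul_of_nonneg_right
        (mul_le_mul_of_nonneg_left hσj (by linarith : (0:ℝ) ≤ θ₂)) (norm_nonneg (s j))
      linarith
    calc chi (H (x (j + 1))) ≤ chi (B j) + ‖H (x (j + 1)) - B j‖ := h1
      _ ≤ θ₂ * σm * ‖s j‖ + (L * ‖s j‖ + (κD * ξ j) ^ ((1:ℝ)/3)) :=
          add_le_add h5 (le_trans h2 (add_le_add h3 h4))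
      _ = (θ₂ * σm + L) * ‖s j‖ + (κD * ξ j) ^ ((1:ℝ)/3) := by ring
  -- pigeonhole
  set Q : ℝ := S + (mm ^ 2 + mm * S) + 1 with hQ
  have hQ1 : 1 ≤ Q := by nlinarith [sq_nonneg mm, mul_nonneg hmm0 hS0]
  have hQ0 : 0 < Q := by linarith
  have hpigeon : ∀ k : ℕ, ∃ j ≤ k, W j + ξ j ≤ Q / ((k:ℝ) + 1) := by
    intro k
    by_contra hcon
    push_neg at hcon
    have hne : (Finset.range (k + 1)).Nonempty := ⟨0, by simp⟩
    have hlt : ∑ _j ∈ Finset.range (k + 1), (Q / ((k:ℝ) + 1))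
        < ∑ j ∈ Finset.range (k + 1), (W j + ξ j) := by
      apply Finset.sum_lt_sum_of_nonempty hne
      intro j hj
      exact hcon j (by simpa [Nat.lt_succ_iff] using Finset.mem_range.mp hj)
    have hlhs : ∑ _j ∈ Finset.range (k + 1), (Q / ((k:ℝ) + 1)) = Q := by
      rw [Finset.sum_const, Finset.card_range, nsmul_eq_mul]
      have : ((k:ℝ) + 1) ≠ 0 := by positivity
      field_simp
      push_cast; ring
    have hrhs : ∑ j ∈ Finset.range (k + 1), (W j + ξ j)
        ≤ S + (mm ^ 2 + mm * S) := by
      rw [Finset.sum_add_distrib]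
      have hA := hS (k + 1)
      have hB := hξsum (k + 1)
      have hC := hS (k + 1)
      have hD' : ∑ j ∈ Finset.range (k + 1), ξ j ≤ mm ^ 2 + mm * S := by
        have := mul_le_mul_of_nonneg_left hC hmm0
        linarith
      linarith
    rw [hlhs] at hlt
    linarith
  -- conclusion
  refine ⟨(θ₂ * σm + L) * Q ^ ((1:ℝ)/3) + (κD * Q) ^ ((1:ℝ)/3) + 1, ?_, ?_⟩
  · have h1 : (0:ℝ) ≤ Q ^ ((1:ℝ)/3) := Real.rpow_nonneg hQ0.le _
    have h2 : (0:ℝ) ≤ (κD * Q) ^ ((1:ℝ)/3) := Real.rpow_nonneg (mul_nonneg hκD hQ0.le) _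
    nlinarith [mul_nonneg (by nlinarith : (0:ℝ) ≤ θ₂ * σm + L) h1]
  · intro k
    obtain ⟨j, hjk, hjle⟩ := hpigeon k
    have hj1 : j + 1 ∈ Finset.Icc 1 (k + 1) := Finset.mem_Icc.mpr ⟨by omega, by omega⟩
    refine le_trans (Finset.inf'_le _ hj1) ?_
    have ht : (0:ℝ) < (k:ℝ) + 1 := by positivity
    have htp : (0:ℝ) < ((k:ℝ) + 1) ^ (-(1:ℝ)/3) := Real.rpow_pos_of_pos ht _
    have hWj : W j ≤ Q / ((k:ℝ) + 1) := by have := hξ0 j; linarith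
    have hξj : ξ j ≤ Q / ((k:ℝ) + 1) := by have := hW0 j; linarith
    have hneg : ((k:ℝ) + 1) ^ (-(1:ℝ)/3) = (((k:ℝ) + 1) ^ ((1:ℝ)/3))⁻¹ := by
      rw [show (-(1:ℝ)/3) = -((1:ℝ)/3) by norm_num, Real.rpow_neg ht.le]
    have hsplit : (Q / ((k:ℝ) + 1)) ^ ((1:ℝ)/3)
        = Q ^ ((1:ℝ)/3) * ((k:ℝ) + 1) ^ (-(1:ℝ)/3) := by
      rw [Real.div_rpow hQ0.le ht.le, hneg, div_eq_mul_inv]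
    have h1 : ‖s j‖ ≤ Q ^ ((1:ℝ)/3) * ((k:ℝ) + 1) ^ (-(1:ℝ)/3) := by
      rw [← hsplit]
      exact cube_root_le (norm_nonneg _) hWj
    have h2 : (κD * ξ j) ^ ((1:ℝ)/3)
        ≤ (κD * Q) ^ ((1:ℝ)/3) * ((k:ℝ) + 1) ^ (-(1:ℝ)/3) := by
      have ha1 : κD * ξ j ≤ (κD * Q) / ((k:ℝ) + 1) := by
        rw [div_eq_mul_inv, mul_assoc, ← div_eq_mul_inv]
        exact mul_le_mul_of_nonneg_left hξj hκD
      have ha2 : ((κD * Q) / ((k:ℝ) + 1)) ^ ((1:ℝ)/3)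
          = (κD * Q) ^ ((1:ℝ)/3) * ((k:ℝ) + 1) ^ (-(1:ℝ)/3) := by
        rw [Real.div_rpow (mul_nonneg hκD hQ0.le) ht.le, hneg, div_eq_mul_inv]
      rw [← ha2]
      exact Real.rpow_le_rpow (mul_nonneg hκD (hξ0 j)) ha1 (by norm_num)
    have h3 := hkey j
    have hcoef : (0:ℝ) ≤ θ₂ * σm + L := by nlinarith
    calc chi (H (x (j + 1)))
        ≤ (θ₂ * σm + L) * ‖s j‖ + (κD * ξ j) ^ ((1:ℝ)/3) := h3
      _ ≤ (θ₂ * σm + L) * (Q ^ ((1:ℝ)/3) * ((k:ℝ) + 1) ^ (-(1:ℝ)/3))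
            + (κD * Q) ^ ((1:ℝ)/3) * ((k:ℝ) + 1) ^ (-(1:ℝ)/3) := by
          gcongr
      _ ≤ ((θ₂ * σm + L) * Q ^ ((1:ℝ)/3) + (κD * Q) ^ ((1:ℝ)/3) + 1)
            * ((k:ℝ) + 1) ^ (-(1:ℝ)/3) := by
          nlinarith [htp]
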